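/- Descent lemma for the momentum update (Lemma 4). Let F : ℝ^d → ℝ be differentiable with L_F-Lipschitz gradient, let η > 0 satisfy η L_F ≤ 1/2, and let w, m ∈ ℝ^d. Set w₊ = w − η m. Then F(w₊) ≤ F(w) + (η/2)‖∇F(w) − m‖² − (η/2)‖∇F(w)‖² − (η/4)‖m‖². -/

import Mathlib

open InnerProductSpace

/-- Descent lemma: quadratic upper bound from Lipschitz gradient. -/
lemma descent_aux
    (d : ℕ) (LF : ℝ)
    (F : EuclideanSpace ℝ (Fin d) → ℝ)
    (hFdiff : Differentiable ℝ F)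
    (hFsmooth : ∀ x y, ‖gradient F x - gradient F y‖ ≤ LF * ‖x - y‖)
    (w v : EuclideanSpace ℝ (Fin d)) :
    F (w + v) ≤ F w + inner ℝ (gradient F w) v + LF / 2 * ‖v‖ ^ 2 := by
  set φ : ℝ → ℝ := fun t =>
    F (w + t • v) - t * inner ℝ (gradient F w) v - LF * ‖v‖ ^ 2 / 2 * t ^ 2 with hφ
  have hderiv : ∀ t : ℝ, HasDerivAt φ
      ((inner ℝ (gradient F (w + t • v)) v : ℝ) - inner ℝ (gradient F w) v
        - LF * ‖v‖ ^ 2 * t) t := by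
    intro t
    have hline : HasDerivAt (fun t : ℝ => w + t • v) v t := by
      simpa using ((hasDerivAt_id t).smul_const v).const_add w
    have hF : HasFDerivAt F (toDual ℝ _ (gradient F (w + t • v))) (w + t • v) :=
      ((hFdiff _).hasGradientAt).hasFDerivAt
    have h1 : HasDerivAt (fun t : ℝ => F (w + t • v))
        ((inner ℝ (gradient F (w + t • v)) v : ℝ)) t := by
      simpa [Function.comp_def] using hF.comp_hasDerivAt t hline
    have h2 : HasDerivAt (fun t : ℝ => t * (inner ℝ (gradient F w) v : ℝ))
        (inner ℝ (gradient F w) v) t := by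
      simpa using (hasDerivAt_id t).mul_const (inner ℝ (gradient F w) v : ℝ)
    have h3 : HasDerivAt (fun t : ℝ => LF * ‖v‖ ^ 2 / 2 * t ^ 2)
        (LF * ‖v‖ ^ 2 * t) t := by
      have := (hasDerivAt_pow 2 t).const_mul (LF * ‖v‖ ^ 2 / 2)
      exact this.congr_deriv (by rw [show (2:ℕ) - 1 = 1 from rfl]; push_cast; ring)
    exact (h1.sub h2).sub h3
  have hmono : AntitoneOn φ (Set.Icc 0 1) := by
    apply antitoneOn_of_deriv_nonpos (convex_Icc 0 1)
    · exact fun t _ => ((hderiv t).differentiableAt).continuousAt.continuousWithinAt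
    · exact fun t _ => ((hderiv t).differentiableAt).differentiableWithinAt
    · intro t ht
      rw [interior_Icc] at ht
      rw [(hderiv t).deriv]
      have hb : (inner ℝ (gradient F (w + t • v)) v : ℝ) - inner ℝ (gradient F w) v
          ≤ LF * ‖v‖ ^ 2 * t := by
        have h1 : (inner ℝ (gradient F (w + t • v)) v : ℝ) - inner ℝ (gradient F w) v
            = inner ℝ (gradient F (w + t • v) - gradient F w) v := by
          rw [inner_sub_left]
        rw [h1]
        calc (inner ℝ (gradient F (w + t • v) - gradient F w) v : ℝ)
            ≤ ‖gradient F (w + t • v) - gradient F w‖ * ‖v‖ :=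
              real_inner_le_norm _ _
          _ ≤ LF * ‖w + t • v - w‖ * ‖v‖ := by
              apply mul_le_mul_of_nonneg_right _ (norm_nonneg v)
              exact hFsmooth _ _
          _ = LF * ‖v‖ ^ 2 * t := by
              have : ‖w + t • v - w‖ = t * ‖v‖ := by
                rw [add_sub_cancel_left, norm_smul, Real.norm_eq_abs,
                  abs_of_pos ht.1]
              rw [this]; ring
      linarith
  have h01 : φ 1 ≤ φ 0 :=
    hmono (by norm_num : (0:ℝ) ∈ Set.Icc (0:ℝ) 1)
      (by norm_num : (1:ℝ) ∈ Set.Icc (0:ℝ) 1) zero_le_one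
  simp only [hφ, one_smul, zero_smul, add_zero, one_pow, one_mul, zero_mul,
    zero_pow, mul_zero, sub_zero] at h01
  linarith

/-- Descent lemma for the momentum update (Lemma 4). -/
theorem descent_lemma_momentum
    (d : ℕ) (LF : ℝ)
    (F : EuclideanSpace ℝ (Fin d) → ℝ)
    (hFdiff : Differentiable ℝ F)
    (hFsmooth : ∀ x y, ‖gradient F x - gradient F y‖ ≤ LF * ‖x - y‖)
    (η : ℝ) (hη : 0 < η) (hηL : η * LF ≤ 1 / 2)
    (w m : EuclideanSpace ℝ (Fin d)) :
    F (w - η • m) ≤ F w + (η / 2) * ‖gradient F w - m‖ ^ 2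
      - (η / 2) * ‖gradient F w‖ ^ 2 - (η / 4) * ‖m‖ ^ 2 := by
  have key := descent_aux d LF F hFdiff hFsmooth w (-(η • m))
  rw [← sub_eq_add_neg] at key
  have h1 : (inner ℝ (gradient F w) (-(η • m)) : ℝ)
      = -(η * inner ℝ (gradient F w) m) := by
    rw [inner_neg_right, real_inner_smul_right]
  have h2 : ‖-(η • m)‖ ^ 2 = η ^ 2 * ‖m‖ ^ 2 := by
    rw [norm_neg, norm_smul, Real.norm_eq_abs, abs_of_pos hη]; ring
  rw [h1, h2] at key
  have h3 : ‖gradient F w - m‖ ^ 2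
      = ‖gradient F w‖ ^ 2 - 2 * inner ℝ (gradient F w) m + ‖m‖ ^ 2 := by
    rw [norm_sub_sq_real]
  have h4 : LF / 2 * (η ^ 2 * ‖m‖ ^ 2) ≤ η / 4 * ‖m‖ ^ 2 := by
    have : LF / 2 * (η ^ 2 * ‖m‖ ^ 2) = (η * LF) * (η / 2) * ‖m‖ ^ 2 := by ring
    rw [this]
    apply mul_le_mul_of_nonneg_right _ (by positivity)
    have hη2 : (0:ℝ) < η / 2 := by linarith
    calc η * LF * (η / 2) ≤ (1/2) * (η / 2) :=
          mul_le_mul_of_nonneg_right hηL (le_of_lt hη2)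
      _ = η / 4 := by ring
  nlinarith [key, h3, h4]
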